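/- Let Q, N > 0 with Q > 4N, and define S_G(P) = N(Q−N−P)/Q for P ∈ [P1, P2] and S_G(P) = S_ℓ(P) otherwise on [0, Q], where P1, P2 are the roots of (P+N)² = QP. Then S_G is the convex envelope of S_ℓ on [0, Q]: S_G is convex, S_G ≤ S_ℓ pointwise, and any convex function below S_ℓ on [0, Q] is below S_G. -/

import Mathlib

open Real Set

noncomputable def Sl (Q N P : ℝ) : ℝ :=
  (Real.sqrt Q - Real.sqrt P) ^ 2 * N / ((Real.sqrt Q - Real.sqrt P) ^ 2 + N)

noncomputable def P1 (Q N : ℝ) : ℝ := (Q - 2 * N - Real.sqrt (Q ^ 2 - 4 * Q * N)) / 2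
noncomputable def P2 (Q N : ℝ) : ℝ := (Q - 2 * N + Real.sqrt (Q ^ 2 - 4 * Q * N)) / 2

noncomputable def SG (Q N P : ℝ) : ℝ :=
  if P ∈ Set.Icc (P1 Q N) (P2 Q N) then N * (Q - N - P) / Q else Sl Q N P

/-! ### Auxiliary definitions -/

/-- Denominator of `Sl`. -/
noncomputable def Dd (Q N P : ℝ) : ℝ := (Real.sqrt Q - Real.sqrt P) ^ 2 + N

/-- Derivative of `Sl`. -/
noncomputable def Sl' (Q N P : ℝ) : ℝ :=
  N ^ 2 * ((Real.sqrt P - Real.sqrt Q) / Real.sqrt P) / (Dd Q N P) ^ 2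

/-- Second derivative of `Sl`. -/
noncomputable def Sl'' (Q N P : ℝ) : ℝ :=
  N ^ 2 * (Real.sqrt Q / (2 * (Real.sqrt P) ^ 3) * Dd Q N P
    - 2 * ((Real.sqrt P - Real.sqrt Q) / Real.sqrt P) ^ 2) / (Dd Q N P) ^ 3

/-- Derivative of `SG`. -/
noncomputable def SG' (Q N P : ℝ) : ℝ :=
  if P ∈ Set.Icc (P1 Q N) (P2 Q N) then -N / Q else Sl' Q N P

section Facts

variable {Q N : ℝ} (hQ : 0 < Q) (hN : 0 < N) (h : 4 * N < Q)

include hQ hN h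

lemma d_sq : Real.sqrt (Q ^ 2 - 4 * Q * N) ^ 2 = Q ^ 2 - 4 * Q * N :=
  Real.sq_sqrt (by nlinarith)

lemma d_pos : 0 < Real.sqrt (Q ^ 2 - 4 * Q * N) :=
  Real.sqrt_pos.2 (by nlinarith)

lemma P1_pos : 0 < P1 Q N := by
  have hd2 := d_sq hQ hN h
  have h1 : Real.sqrt (Q ^ 2 - 4 * Q * N) < Real.sqrt ((Q - 2 * N) ^ 2) :=
    Real.sqrt_lt_sqrt (by nlinarith) (by nlinarith)
  rw [Real.sqrt_sq (by linarith)] at h1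
  simp only [P1]; linarith

lemma P1_lt_P2 : P1 Q N < P2 Q N := by
  have := d_pos hQ hN h
  simp only [P1, P2]; linarith

lemma P2_lt : P2 Q N < Q - N := by
  have h1 : Real.sqrt (Q ^ 2 - 4 * Q * N) < Real.sqrt (Q ^ 2) :=
    Real.sqrt_lt_sqrt (by nlinarith) (by nlinarith)
  rw [show (Q:ℝ)^2 = Q^2 from rfl, Real.sqrt_sq (by linarith)] at h1
  simp only [P2]; linarith

lemma root_eq (p : ℝ) : (p - P1 Q N) * (p - P2 Q N) = (p + N) ^ 2 - Q * p := by
  have hd2 := d_sq hQ hN h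
  simp only [P1, P2]
  linear_combination (-1 / 4 : ℝ) * hd2

/-- If `(p+N)^2 = Q p` then `√Q √p = p + N`. -/
lemma sqrt_junction {p : ℝ} (hp0 : 0 ≤ p) (hroot : (p + N) ^ 2 = Q * p) :
    Real.sqrt Q * Real.sqrt p = p + N := by
  rw [← Real.sqrt_mul hQ.le, ← hroot]
  exact Real.sqrt_sq (by linarith)

lemma P1_root : (P1 Q N + N) ^ 2 = Q * P1 Q N := by
  have := root_eq hQ hN h (P1 Q N)
  simp at this; linarith [this]

lemma P2_root : (P2 Q N + N) ^ 2 = Q * P2 Q N := by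
  have := root_eq hQ hN h (P2 Q N)
  simp at this; linarith [this]

end Facts
section Facts2

variable {Q N : ℝ} (hQ : 0 < Q) (hN : 0 < N)

include hQ hN

lemma Dd_pos (p : ℝ) : 0 < Dd Q N p := by
  have : (0:ℝ) ≤ (Real.sqrt Q - Real.sqrt p) ^ 2 := sq_nonneg _
  simp only [Dd]; linarith

/-- At a junction point (`√Q √p = p + N`), `Sl` agrees with the line. -/
lemma Sl_eq_line {p : ℝ} (hp0 : 0 < p) (hj : Real.sqrt Q * Real.sqrt p = p + N) :
    Sl Q N p = N * (Q - N - p) / Q := by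
  set a := Real.sqrt Q with ha_def
  set b := Real.sqrt p with hb_def
  have ha2 : a ^ 2 = Q := Real.sq_sqrt hQ.le
  have hb2 : b ^ 2 = p := Real.sq_sqrt hp0.le
  have hb : 0 < b := Real.sqrt_pos.2 hp0
  have ha : 0 < a := Real.sqrt_pos.2 hQ
  have hNab : N = a * b - b ^ 2 := by rw [hb2]; linarith [hj]
  have hba : b < a := by nlinarith
  rw [Sl, ← ha2, ← hb2, hNab]
  rw [Real.sqrt_sq ha.le, Real.sqrt_sq hb.le]
  have hden : (a - b) ^ 2 + (a * b - b ^ 2) ≠ 0 := by nlinarith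
  have ha' : a ≠ 0 := ha.ne'
  have hab' : a - b ≠ 0 := sub_ne_zero.2 hba.ne'
  clear_value a b
  field_simp
  have hinv : a * a⁻¹ = 1 := mul_inv_cancel₀ ha'
  linear_combination (a ^ 2 - a * b) * hinv

/-- At a junction point, the derivative of `Sl` is `-N/Q`. -/
lemma Sl'_junction {p : ℝ} (hp0 : 0 < p) (hj : Real.sqrt Q * Real.sqrt p = p + N) :
    Sl' Q N p = -N / Q := by
  set a := Real.sqrt Q with ha_def
  set b := Real.sqrt p with hb_def
  have ha2 : a ^ 2 = Q := Real.sq_sqrt hQ.le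
  have hb2 : b ^ 2 = p := Real.sq_sqrt hp0.le
  have hb : 0 < b := Real.sqrt_pos.2 hp0
  have ha : 0 < a := Real.sqrt_pos.2 hQ
  have hNab : N = a * b - b ^ 2 := by rw [hb2]; linarith [hj]
  have hba : b < a := by nlinarith
  rw [Sl', Dd, ← ha2, hNab]
  rw [Real.sqrt_sq ha.le, ← hb_def]
  have hden : (a - b) ^ 2 + (a * b - b ^ 2) ≠ 0 := by nlinarith
  have ha' : a ≠ 0 := ha.ne'
  have hab' : a - b ≠ 0 := sub_ne_zero.2 hba.ne'
  clear_value a b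
  field_simp
  have hinv : a * a⁻¹ = 1 := mul_inv_cancel₀ ha'
  linear_combination (b - a) * (a * a⁻¹ + 1) * hinv

/-- The line is a global minorant of `Sl` on `[0, ∞)`. -/
lemma line_le_Sl {p : ℝ} (hp0 : 0 ≤ p) : N * (Q - N - p) / Q ≤ Sl Q N p := by
  set a := Real.sqrt Q with ha_def
  set b := Real.sqrt p with hb_def
  have ha2 : a ^ 2 = Q := Real.sq_sqrt hQ.le
  have hb2 : b ^ 2 = p := Real.sq_sqrt hp0
  have ha : 0 < a := Real.sqrt_pos.2 hQ
  have hD : 0 < (a - b) ^ 2 + N := by nlinarith [sq_nonneg (a - b)]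
  have key : Sl Q N p - N * (Q - N - p) / Q
      = N * (a * b - (p + N)) ^ 2 / (Q * ((a - b) ^ 2 + N)) := by
    rw [Sl, ← ha2, ← hb2]
    rw [Real.sqrt_sq ha.le, Real.sqrt_sq (show (0:ℝ) ≤ b from Real.sqrt_nonneg p)]
    have ha' : a ≠ 0 := ha.ne'
    field_simp
    ring
  nlinarith [mul_nonneg hN.le (sq_nonneg (a * b - (p + N))),
    div_nonneg (mul_nonneg hN.le (sq_nonneg (a * b - (p + N)))) (by positivity : (0:ℝ) ≤ Q * ((a - b) ^ 2 + N))]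

end Facts2
section Derivs

variable {Q N : ℝ} (hQ : 0 < Q) (hN : 0 < N)

include hQ hN

set_option maxHeartbeats 1000000 in
lemma hasDerivAt_Sl {p : ℝ} (hp : 0 < p) : HasDerivAt (Sl Q N) (Sl' Q N p) p := by
  have hbpos : 0 < Real.sqrt p := Real.sqrt_pos.2 hp
  have hb : Real.sqrt p ≠ 0 := hbpos.ne'
  have hsq : HasDerivAt Real.sqrt (1 / (2 * Real.sqrt p)) p := Real.hasDerivAt_sqrt hp.ne'
  have hu : HasDerivAt (fun x => Real.sqrt Q - Real.sqrt x) (-(1 / (2 * Real.sqrt p))) p :=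
    hsq.const_sub _
  have hu2 : HasDerivAt (fun x => (Real.sqrt Q - Real.sqrt x) ^ 2)
      ((2 : ℕ) * (Real.sqrt Q - Real.sqrt p) ^ 1 * (-(1 / (2 * Real.sqrt p)))) p := hu.pow 2
  have hnum := hu2.mul_const N
  have hden := hu2.add_const N
  have hD : (Real.sqrt Q - Real.sqrt p) ^ 2 + N ≠ 0 := by
    simpa [Dd] using (Dd_pos hQ hN p).ne'
  have hdiv := hnum.div hden hD
  have hfun : Sl Q N = fun y => (Real.sqrt Q - Real.sqrt y) ^ 2 * N /
      ((Real.sqrt Q - Real.sqrt y) ^ 2 + N) := rfl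
  rw [hfun]
  refine HasDerivAt.congr_deriv hdiv ?_
  rw [Sl', Dd]
  set a := Real.sqrt Q
  set b := Real.sqrt p
  field_simp
  ring

set_option maxHeartbeats 1000000 in
lemma hasDerivAt_Sl' {p : ℝ} (hp : 0 < p) : HasDerivAt (Sl' Q N) (Sl'' Q N p) p := by
  have hbpos : 0 < Real.sqrt p := Real.sqrt_pos.2 hp
  have hb : Real.sqrt p ≠ 0 := hbpos.ne'
  have hsq : HasDerivAt Real.sqrt (1 / (2 * Real.sqrt p)) p := Real.hasDerivAt_sqrt hp.ne'
  have hinv : HasDerivAt (fun x => (Real.sqrt x)⁻¹)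
      (-(1 / (2 * Real.sqrt p)) / (Real.sqrt p) ^ 2) p := hsq.inv hb
  have hg : HasDerivAt (fun x => 1 - Real.sqrt Q * (Real.sqrt x)⁻¹)
      (-(Real.sqrt Q * (-(1 / (2 * Real.sqrt p)) / (Real.sqrt p) ^ 2))) p :=
    (hinv.const_mul (Real.sqrt Q)).const_sub 1
  have hnum := hg.const_mul (N ^ 2)
  have hu : HasDerivAt (fun x => Real.sqrt Q - Real.sqrt x) (-(1 / (2 * Real.sqrt p))) p :=
    hsq.const_sub _
  have hu2 : HasDerivAt (fun x => (Real.sqrt Q - Real.sqrt x) ^ 2)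
      ((2 : ℕ) * (Real.sqrt Q - Real.sqrt p) ^ 1 * (-(1 / (2 * Real.sqrt p)))) p := hu.pow 2
  have hDD := hu2.add_const N
  have hD : (Real.sqrt Q - Real.sqrt p) ^ 2 + N ≠ 0 := by
    simpa [Dd] using (Dd_pos hQ hN p).ne'
  have hden := hDD.pow 2
  have hD2 : ((Real.sqrt Q - Real.sqrt p) ^ 2 + N) ^ 2 ≠ 0 := pow_ne_zero _ hD
  have hdiv := hnum.div hden hD2
  have heq : Sl' Q N =ᶠ[nhds p]
      fun x => N ^ 2 * (1 - Real.sqrt Q * (Real.sqrt x)⁻¹) /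
        ((Real.sqrt Q - Real.sqrt x) ^ 2 + N) ^ 2 := by
    filter_upwards [isOpen_Ioi.mem_nhds (show p ∈ Ioi (0:ℝ) from hp)] with x hx
    have hbx : Real.sqrt x ≠ 0 := (Real.sqrt_pos.2 hx).ne'
    rw [Sl', Dd]
    have hfr : (Real.sqrt x - Real.sqrt Q) / Real.sqrt x
        = 1 - Real.sqrt Q * (Real.sqrt x)⁻¹ := by field_simp
    rw [hfr]
  refine HasDerivAt.congr_of_eventuallyEq ?_ heq
  refine HasDerivAt.congr_deriv hdiv ?_
  simp only [Pi.pow_apply]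
  rw [Sl'', Dd]
  set a := Real.sqrt Q
  set b := Real.sqrt p
  set D := (a - b) ^ 2 + N with hD_def
  field_simp
  ring

end Derivs
section SecondDeriv

variable {Q N : ℝ} (hQ : 0 < Q) (hN : 0 < N)

include hQ hN

/-- If `√Q √p ≤ p + N` (i.e. `p` outside `(P1, P2)`), the second derivative is nonneg. -/
lemma Sl''_nonneg {p : ℝ} (hp : 0 < p) (hpQ : p ≤ Q)
    (hkey : Real.sqrt Q * Real.sqrt p ≤ p + N) : 0 ≤ Sl'' Q N p := by
  set a := Real.sqrt Q with ha_def
  set b := Real.sqrt p with hb_def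
  have ha2 : a ^ 2 = Q := Real.sq_sqrt hQ.le
  have hb2 : b ^ 2 = p := Real.sq_sqrt hp.le
  have hb : 0 < b := Real.sqrt_pos.2 hp
  have ha : 0 < a := Real.sqrt_pos.2 hQ
  have hba : b ≤ a := Real.sqrt_le_sqrt hpQ
  have hNb : b * (a - b) ≤ N := by nlinarith
  have hD : 0 < Dd Q N p := Dd_pos hQ hN p
  have hDval : Dd Q N p = (a - b) ^ 2 + N := rfl
  rw [Sl'']
  apply div_nonneg _ (by positivity)
  apply mul_nonneg (sq_nonneg _)
  have hsplit : a / (2 * b ^ 3) * Dd Q N p - 2 * ((b - a) / b) ^ 2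
      = (a * ((a - b) ^ 2 + N) - 4 * b * (a - b) ^ 2) / (2 * b ^ 3) := by
    rw [hDval]; field_simp; ring
  rw [hsplit]
  apply div_nonneg _ (by positivity)
  nlinarith [mul_nonneg (sub_nonneg.2 hba) (sq_nonneg (a - 2 * b)), sq_nonneg (a - b)]

variable (h : 4 * N < Q)
include h

/-- Outside `(P1, P2)` the key inequality holds. -/
lemma key_ineq {p : ℝ} (hp0 : 0 ≤ p) (hout : 0 ≤ (p - P1 Q N) * (p - P2 Q N)) :
    Real.sqrt Q * Real.sqrt p ≤ p + N := by
  have hroot := root_eq hQ hN h p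
  have hsq : Q * p ≤ (p + N) ^ 2 := by nlinarith
  calc Real.sqrt Q * Real.sqrt p = Real.sqrt (Q * p) := (Real.sqrt_mul hQ.le p).symm
    _ ≤ Real.sqrt ((p + N) ^ 2) := Real.sqrt_le_sqrt hsq
    _ = p + N := Real.sqrt_sq (by linarith)

lemma mono_Sl'_left : MonotoneOn (Sl' Q N) (Ioc 0 (P1 Q N)) := by
  have hP1 := P1_pos hQ hN h
  have hP12 := P1_lt_P2 hQ hN h
  have hP2Q : P2 Q N < Q := by have := P2_lt hQ hN h; linarith
  apply monotoneOn_of_deriv_nonneg (convex_Ioc _ _)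
  · exact fun x hx => ((hasDerivAt_Sl' hQ hN hx.1).continuousAt).continuousWithinAt
  · rw [interior_Ioc]
    exact fun x hx => (hasDerivAt_Sl' hQ hN hx.1).differentiableAt.differentiableWithinAt
  · rw [interior_Ioc]
    intro x hx
    rw [(hasDerivAt_Sl' hQ hN hx.1).deriv]
    apply Sl''_nonneg hQ hN hx.1 (by linarith [hx.2])
    apply key_ineq hQ hN h hx.1.le
    have h1 : x - P1 Q N ≤ 0 := by linarith [hx.2]
    have h2 : x - P2 Q N ≤ 0 := by linarith [hx.2]
    nlinarith [mul_nonneg (neg_nonneg.2 h1) (neg_nonneg.2 h2)]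

lemma mono_Sl'_right : MonotoneOn (Sl' Q N) (Ico (P2 Q N) Q) := by
  have hP1 := P1_pos hQ hN h
  have hP12 := P1_lt_P2 hQ hN h
  apply monotoneOn_of_deriv_nonneg (convex_Ico _ _)
  · exact fun x hx => ((hasDerivAt_Sl' hQ hN (by linarith [hx.1] : (0:ℝ) < x)).continuousAt).continuousWithinAt
  · rw [interior_Ico]
    exact fun x hx => (hasDerivAt_Sl' hQ hN (by linarith [hx.1] : (0:ℝ) < x)).differentiableAt.differentiableWithinAt
  · rw [interior_Ico]
    intro x hx
    have hx0 : 0 < x := by linarith [hx.1]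
    rw [(hasDerivAt_Sl' hQ hN hx0).deriv]
    apply Sl''_nonneg hQ hN hx0 hx.2.le
    apply key_ineq hQ hN h hx0.le
    have h1 : 0 ≤ x - P1 Q N := by linarith [hx.1]
    have h2 : 0 ≤ x - P2 Q N := by linarith [hx.1]
    exact mul_nonneg h1 h2

end SecondDeriv
section Glue

variable {Q N : ℝ} (hQ : 0 < Q) (hN : 0 < N) (h : 4 * N < Q)

omit h in
lemma hasDerivAt_line (p : ℝ) :
    HasDerivAt (fun x => N * (Q - N - x) / Q) (-N / Q) p := by
  have h1 := (((hasDerivAt_id p).const_sub (Q - N)).const_mul N).div_const Q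
  refine HasDerivAt.congr_deriv h1 ?_
  ring

include hQ hN h

lemma junction1 : Real.sqrt Q * Real.sqrt (P1 Q N) = P1 Q N + N :=
  sqrt_junction hQ hN h (P1_pos hQ hN h).le (P1_root hQ hN h)

lemma junction2 : Real.sqrt Q * Real.sqrt (P2 Q N) = P2 Q N + N :=
  sqrt_junction hQ hN h (by linarith [P1_pos hQ hN h, P1_lt_P2 hQ hN h] : (0:ℝ) ≤ P2 Q N)
    (P2_root hQ hN h)

lemma P2_pos : 0 < P2 Q N := lt_trans (P1_pos hQ hN h) (P1_lt_P2 hQ hN h)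

lemma hasDerivAt_SG {p : ℝ} (hp : p ∈ Ioo 0 Q) :
    HasDerivAt (SG Q N) (SG' Q N p) p := by
  have hP1pos := P1_pos hQ hN h
  have hP12 := P1_lt_P2 hQ hN h
  have hP2Q : P2 Q N < Q := by linarith [P2_lt hQ hN h]
  have hP2pos := P2_pos hQ hN h
  have hj1 := junction1 hQ hN h
  have hj2 := junction2 hQ hN h
  rcases lt_trichotomy p (P1 Q N) with h1 | h1 | h1
  · -- p < P1 : SG = Sl near p
    have hSG' : SG' Q N p = Sl' Q N p := by
      rw [SG', if_neg]; intro hmem; exact absurd hmem.1 (not_le.2 h1)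
    rw [hSG']
    apply (hasDerivAt_Sl hQ hN hp.1).congr_of_eventuallyEq
    filter_upwards [isOpen_Iio.mem_nhds h1] with y hy
    rw [SG, if_neg]; intro hmem; exact absurd hmem.1 (not_le.2 hy)
  · -- p = P1 : glue
    rw [h1]
    have hSG' : SG' Q N (P1 Q N) = -N / Q := by
      rw [SG', if_pos ⟨le_refl _, hP12.le⟩]
    rw [hSG']
    have hSG_Sl : ∀ y ∈ Iic (P1 Q N), SG Q N y = Sl Q N y := by
      intro y hy
      rcases eq_or_lt_of_le (mem_Iic.1 hy) with rfl | hlt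
      · rw [SG, if_pos ⟨le_refl _, hP12.le⟩]
        exact (Sl_eq_line hQ hN hP1pos hj1).symm
      · rw [SG, if_neg]; intro hmem; exact absurd hmem.1 (not_le.2 hlt)
    have hSl'val : Sl' Q N (P1 Q N) = -N / Q := Sl'_junction hQ hN hP1pos hj1
    have hleft : HasDerivWithinAt (SG Q N) (-N / Q) (Iic (P1 Q N)) (P1 Q N) := by
      have base := (hasDerivAt_Sl hQ hN hP1pos).hasDerivWithinAt (s := Iic (P1 Q N))
      rw [hSl'val] at base
      exact base.congr hSG_Sl (hSG_Sl _ (mem_of_eq_of_mem rfl (by simp)))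
    have hright : HasDerivWithinAt (SG Q N) (-N / Q) (Ici (P1 Q N)) (P1 Q N) := by
      have base := (hasDerivAt_line (N := N) (Q := Q) (P1 Q N)).hasDerivWithinAt
        (s := Ici (P1 Q N))
      apply base.congr_of_eventuallyEq
      · filter_upwards [self_mem_nhdsWithin,
          mem_nhdsWithin_of_mem_nhds (isOpen_Iio.mem_nhds hP12)] with y hy1 hy2
        rw [SG, if_pos ⟨hy1, hy2.le⟩]
      · rw [SG, if_pos ⟨le_refl _, hP12.le⟩]
    have := hleft.union hright
    rw [Iic_union_Ici] at this
    exact hasDerivWithinAt_univ.1 this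
  rcases lt_trichotomy p (P2 Q N) with h2 | h2 | h2
  · -- P1 < p < P2 : SG = line near p
    have hSG' : SG' Q N p = -N / Q := by
      rw [SG', if_pos ⟨h1.le, h2.le⟩]
    rw [hSG']
    apply (hasDerivAt_line (N := N) (Q := Q) p).congr_of_eventuallyEq
    filter_upwards [isOpen_Ioo.mem_nhds (⟨h1, h2⟩ : p ∈ Ioo (P1 Q N) (P2 Q N))] with y hy
    rw [SG, if_pos ⟨hy.1.le, hy.2.le⟩]
  · -- p = P2 : glue
    rw [h2]
    have hSG' : SG' Q N (P2 Q N) = -N / Q := by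
      rw [SG', if_pos ⟨hP12.le, le_refl _⟩]
    rw [hSG']
    have hSG_Sl : ∀ y ∈ Ici (P2 Q N), SG Q N y = Sl Q N y := by
      intro y hy
      rcases eq_or_lt_of_le (mem_Ici.1 hy) with rfl | hlt
      · rw [SG, if_pos ⟨hP12.le, le_refl _⟩]
        exact (Sl_eq_line hQ hN hP2pos hj2).symm
      · rw [SG, if_neg]; intro hmem; exact absurd hmem.2 (not_le.2 hlt)
    have hSl'val : Sl' Q N (P2 Q N) = -N / Q := Sl'_junction hQ hN hP2pos hj2
    have hright : HasDerivWithinAt (SG Q N) (-N / Q) (Ici (P2 Q N)) (P2 Q N) := by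
      have base := (hasDerivAt_Sl hQ hN hP2pos).hasDerivWithinAt (s := Ici (P2 Q N))
      rw [hSl'val] at base
      exact base.congr hSG_Sl (hSG_Sl _ (mem_of_eq_of_mem rfl (by simp)))
    have hleft : HasDerivWithinAt (SG Q N) (-N / Q) (Iic (P2 Q N)) (P2 Q N) := by
      have base := (hasDerivAt_line (N := N) (Q := Q) (P2 Q N)).hasDerivWithinAt
        (s := Iic (P2 Q N))
      apply base.congr_of_eventuallyEq
      · filter_upwards [self_mem_nhdsWithin,
          mem_nhdsWithin_of_mem_nhds (isOpen_Ioi.mem_nhds hP12)] with y hy1 hy2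
        rw [SG, if_pos ⟨hy2.le, hy1⟩]
      · rw [SG, if_pos ⟨hP12.le, le_refl _⟩]
    have := hleft.union hright
    rw [Iic_union_Ici] at this
    exact hasDerivWithinAt_univ.1 this
  · -- P2 < p : SG = Sl near p
    have hSG' : SG' Q N p = Sl' Q N p := by
      rw [SG', if_neg]; intro hmem; exact absurd hmem.2 (not_le.2 h2)
    rw [hSG']
    apply (hasDerivAt_Sl hQ hN hp.1).congr_of_eventuallyEq
    filter_upwards [isOpen_Ioi.mem_nhds h2] with y hy
    rw [SG, if_neg]; intro hmem; exact absurd hmem.2 (not_le.2 hy)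

end Glue
section Main

variable {Q N : ℝ} (hQ : 0 < Q) (hN : 0 < N) (h : 4 * N < Q)

include hQ hN h

lemma mono_SG' : MonotoneOn (SG' Q N) (Ioo 0 Q) := by
  have hP1pos := P1_pos hQ hN h
  have hP12 := P1_lt_P2 hQ hN h
  have hP2Q : P2 Q N < Q := by linarith [P2_lt hQ hN h]
  have hP2pos := P2_pos hQ hN h
  have hSl'1 : Sl' Q N (P1 Q N) = -N / Q := Sl'_junction hQ hN hP1pos (junction1 hQ hN h)
  have hSl'2 : Sl' Q N (P2 Q N) = -N / Q := Sl'_junction hQ hN hP2pos (junction2 hQ hN h)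
  have hle : ∀ z, 0 < z → z ≤ P1 Q N → Sl' Q N z ≤ -N / Q := by
    intro z hz hz1
    rw [← hSl'1]
    exact mono_Sl'_left hQ hN h ⟨hz, hz1⟩ ⟨hP1pos, le_refl _⟩ hz1
  have hge : ∀ z, P2 Q N ≤ z → z < Q → -N / Q ≤ Sl' Q N z := by
    intro z hz2 hzQ
    rw [← hSl'2]
    exact mono_Sl'_right hQ hN h ⟨le_refl _, hP2Q⟩ ⟨hz2, hzQ⟩ hz2
  intro x hx y hy hxy
  by_cases hxI : x ∈ Icc (P1 Q N) (P2 Q N) <;> by_cases hyI : y ∈ Icc (P1 Q N) (P2 Q N)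
  · rw [SG', SG', if_pos hxI, if_pos hyI]
  · rw [SG', SG', if_pos hxI, if_neg hyI]
    have hPy : P2 Q N < y := not_le.1 fun hc => hyI ⟨le_trans hxI.1 hxy, hc⟩
    exact hge y hPy.le hy.2
  · rw [SG', SG', if_neg hxI, if_pos hyI]
    have hPx : x < P1 Q N := not_le.1 fun hc => hxI ⟨hc, le_trans hxy hyI.2⟩
    exact hle x hx.1 hPx.le
  · rw [SG', SG', if_neg hxI, if_neg hyI]
    have hx' : x < P1 Q N ∨ P2 Q N < x := by
      by_contra hc; push_neg at hc; exact hxI ⟨hc.1, hc.2⟩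
    have hy' : y < P1 Q N ∨ P2 Q N < y := by
      by_contra hc; push_neg at hc; exact hyI ⟨hc.1, hc.2⟩
    rcases hx' with hx' | hx' <;> rcases hy' with hy' | hy'
    · exact mono_Sl'_left hQ hN h ⟨hx.1, hx'.le⟩ ⟨hy.1, hy'.le⟩ hxy
    · exact le_trans (hle x hx.1 hx'.le) (hge y hy'.le hy.2)
    · linarith
    · exact mono_Sl'_right hQ hN h ⟨hx'.le, hx.2⟩ ⟨hy'.le, hy.2⟩ hxy

lemma continuous_Sl : Continuous (Sl Q N) := by
  apply Continuous.div
  · exact ((continuous_const.sub Real.continuous_sqrt).pow 2).mul continuous_const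
  · exact ((continuous_const.sub Real.continuous_sqrt).pow 2).add continuous_const
  · intro x
    have := Dd_pos hQ hN x
    simpa [Dd] using this.ne'

lemma continuousOn_SG : ContinuousOn (SG Q N) (Icc 0 Q) := by
  have hP1pos := P1_pos hQ hN h
  have hP12 := P1_lt_P2 hQ hN h
  have hP2Q : P2 Q N < Q := by linarith [P2_lt hQ hN h]
  intro x hx
  rcases hx.1.eq_or_lt with rfl | h0
  · apply ((continuous_Sl hQ hN h).continuousAt.continuousWithinAt).congr_of_eventuallyEq
    · filter_upwards [mem_nhdsWithin_of_mem_nhds (isOpen_Iio.mem_nhds hP1pos)] with y hy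
      rw [SG, if_neg]; intro hmem; exact absurd hmem.1 (not_le.2 hy)
    · rw [SG, if_neg]; intro hmem; exact absurd hmem.1 (not_le.2 hP1pos)
  rcases hx.2.eq_or_lt with rfl | hxQ
  · apply ((continuous_Sl hQ hN h).continuousAt.continuousWithinAt).congr_of_eventuallyEq
    · filter_upwards [mem_nhdsWithin_of_mem_nhds (isOpen_Ioi.mem_nhds hP2Q)] with y hy
      rw [SG, if_neg]; intro hmem; exact absurd hmem.2 (not_le.2 hy)
    · rw [SG, if_neg]; intro hmem; exact absurd hmem.2 (not_le.2 hP2Q)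
  · exact ((hasDerivAt_SG hQ hN h ⟨h0, hxQ⟩).continuousAt).continuousWithinAt

lemma convexOn_SG : ConvexOn ℝ (Icc 0 Q) (SG Q N) := by
  have hmono : MonotoneOn (deriv (SG Q N)) (interior (Icc 0 Q)) := by
    rw [interior_Icc]
    intro x hx y hy hxy
    rw [(hasDerivAt_SG hQ hN h hx).deriv, (hasDerivAt_SG hQ hN h hy).deriv]
    exact mono_SG' hQ hN h hx hy hxy
  apply hmono.convexOn_of_deriv (convex_Icc 0 Q) (continuousOn_SG hQ hN h)
  rw [interior_Icc]
  exact fun x hx => (hasDerivAt_SG hQ hN h hx).differentiableAt.differentiableWithinAt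

end Main
/-- For `Q > 4N`, `S_G` is the convex envelope of `Sℓ` on `[0, Q]`: it is convex,
pointwise below `Sℓ`, and dominates any convex minorant of `Sℓ` on `[0, Q]`. -/
theorem SG_convex_envelope (Q N : ℝ) (hQ : 0 < Q) (hN : 0 < N) (h : Q > 4 * N) :
    ConvexOn ℝ (Set.Icc 0 Q) (SG Q N) ∧
    (∀ P ∈ Set.Icc (0 : ℝ) Q, SG Q N P ≤ Sl Q N P) ∧
    (∀ φ : ℝ → ℝ, ConvexOn ℝ (Set.Icc 0 Q) φ →
      (∀ P ∈ Set.Icc (0 : ℝ) Q, φ P ≤ Sl Q N P) →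
      ∀ P ∈ Set.Icc (0 : ℝ) Q, φ P ≤ SG Q N P) := by
  have h' : 4 * N < Q := h
  have hP1pos := P1_pos hQ hN h'
  have hP12 := P1_lt_P2 hQ hN h'
  have hP2Q : P2 Q N < Q := by linarith [P2_lt hQ hN h']
  have hP2pos := P2_pos hQ hN h'
  refine ⟨convexOn_SG hQ hN h', ?_, ?_⟩
  · -- SG ≤ Sl
    intro P hP
    rw [SG]
    split_ifs with hmem
    · exact line_le_Sl hQ hN hP.1
    · exact le_refl _
  · -- envelope property
    intro φ hφ hφle P hP
    by_cases hmem : P ∈ Icc (P1 Q N) (P2 Q N)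
    · rw [SG, if_pos hmem]
      have hP1m : P1 Q N ∈ Icc (0:ℝ) Q := ⟨hP1pos.le, by linarith⟩
      have hP2m : P2 Q N ∈ Icc (0:ℝ) Q := ⟨hP2pos.le, hP2Q.le⟩
      set a : ℝ := (P2 Q N - P) / (P2 Q N - P1 Q N) with ha_def
      set b : ℝ := (P - P1 Q N) / (P2 Q N - P1 Q N) with hb_def
      have hd : (0:ℝ) < P2 Q N - P1 Q N := by linarith
      have ha0 : 0 ≤ a := div_nonneg (by linarith [hmem.2]) hd.le
      have hb0 : 0 ≤ b := div_nonneg (by linarith [hmem.1]) hd.le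
      have hab : a + b = 1 := by rw [ha_def, hb_def]; field_simp; ring
      have hcomb : a • P1 Q N + b • P2 Q N = P := by
        rw [smul_eq_mul, smul_eq_mul, ha_def, hb_def]
        field_simp
        ring
      have hconv := hφ.2 hP1m hP2m ha0 hb0 hab
      rw [hcomb] at hconv
      have hSl1 : Sl Q N (P1 Q N) = N * (Q - N - P1 Q N) / Q :=
        Sl_eq_line hQ hN hP1pos (junction1 hQ hN h')
      have hSl2 : Sl Q N (P2 Q N) = N * (Q - N - P2 Q N) / Q :=
        Sl_eq_line hQ hN hP2pos (junction2 hQ hN h')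
      have hb1 : φ (P1 Q N) ≤ N * (Q - N - P1 Q N) / Q := hSl1 ▸ hφle _ hP1m
      have hb2 : φ (P2 Q N) ≤ N * (Q - N - P2 Q N) / Q := hSl2 ▸ hφle _ hP2m
      have hfin : a * (N * (Q - N - P1 Q N) / Q) + b * (N * (Q - N - P2 Q N) / Q)
          = N * (Q - N - P) / Q := by
        rw [ha_def, hb_def]
        field_simp
        ring
      simp only [smul_eq_mul] at hconv
      calc φ P ≤ a * φ (P1 Q N) + b * φ (P2 Q N) := hconv
        _ ≤ a * (N * (Q - N - P1 Q N) / Q) + b * (N * (Q - N - P2 Q N) / Q) := by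
            apply add_le_add
            · exact mul_le_mul_of_nonneg_left hb1 ha0
            · exact mul_le_mul_of_nonneg_left hb2 hb0
        _ = N * (Q - N - P) / Q := hfin
    · rw [SG, if_neg hmem]
      exact hφle P hP
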